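/- Let S = ℂ[x, y]/(x² − y³) be the coordinate ring of the cuspidal cubic, with x, y denoting the images of the variables, let Ω_{S/ℂ} be the module of Kähler differentials of S over ℂ with universal derivation d, and let β = 2y·dx − 3x·dy ∈ Ω_{S/ℂ}. Then the torsion submodule of the S-module Ω_{S/ℂ} equals the S-submodule generated by β, and as a ℂ-vector space this torsion submodule has dimension 2, with basis given by β and y·β. -/

import Mathlib

set_option synthInstance.maxHeartbeats 1000000
set_option maxHeartbeats 1600000

open MvPolynomial

/-- The coordinate ring `S = ℂ[x, y]/(x² − y³)` of the cuspidal cubic. -/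
noncomputable abbrev cuspCurve : Type :=
  MvPolynomial (Fin 2) ℂ ⧸ Ideal.span {(X 0 ^ 2 - X 1 ^ 3 : MvPolynomial (Fin 2) ℂ)}

/-- The image `x` of the first variable in `S`. -/
noncomputable def cx : cuspCurve := Ideal.Quotient.mk _ (X 0)

/-- The image `y` of the second variable in `S`. -/
noncomputable def cy : cuspCurve := Ideal.Quotient.mk _ (X 1)

/-- The Kähler differential form `β = 2y·dx − 3x·dy ∈ Ω_{S/ℂ}`. -/
noncomputable def cuspBeta : KaehlerDifferential ℂ cuspCurve :=
  (2 * cy) • (KaehlerDifferential.D ℂ cuspCurve cx) -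
    (3 * cx) • (KaehlerDifferential.D ℂ cuspCurve cy)

namespace Cusp

noncomputable abbrev fcusp : MvPolynomial (Fin 2) ℂ := X 0 ^ 2 - X 1 ^ 3

noncomputable abbrev mkc : MvPolynomial (Fin 2) ℂ →+* cuspCurve := Ideal.Quotient.mk _

lemma aeval_mk (p : MvPolynomial (Fin 2) ℂ) :
    aeval (fun i => (mkc (X i) : cuspCurve)) p = mkc p := by
  rw [show (mkc p : cuspCurve) = Ideal.Quotient.mkₐ ℂ _ p from rfl,
    MvPolynomial.aeval_unique (Ideal.Quotient.mkₐ ℂ _)]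
  rfl

@[reducible] noncomputable def pres : Algebra.Presentation ℂ cuspCurve (Fin 2) Unit where
  val i := mkc (X i)
  σ' s := (Ideal.Quotient.mk_surjective s).choose
  aeval_val_σ' s := by
    rw [aeval_mk]; exact (Ideal.Quotient.mk_surjective s).choose_spec
  relation _ := fcusp
  span_range_relation_eq_ker := by
    rw [Algebra.Generators.ker_eq_ker_aeval_val]
    have : RingHom.ker (aeval (R := ℂ) fun i => (mkc (X i) : cuspCurve)) = RingHom.ker mkc := by
      ext p
      simp only [RingHom.mem_ker, ← aeval_mk p]
    rw [this, Ideal.mk_ker]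
    congr 1
    simp [Set.range_const]

end Cusp

namespace Cusp
open Polynomial

noncomputable def Φ : MvPolynomial (Fin 2) ℂ →ₐ[ℂ] Polynomial ℂ :=
  MvPolynomial.aeval ![Polynomial.X ^ 3, Polynomial.X ^ 2]

noncomputable def φ : cuspCurve →ₐ[ℂ] Polynomial ℂ :=
  Ideal.Quotient.liftₐ _ Φ (by
    intro a ha
    rw [Ideal.mem_span_singleton] at ha
    obtain ⟨c, rfl⟩ := ha
    rw [map_mul]
    have : Φ fcusp = 0 := by
      simp only [Φ, fcusp, map_sub, map_pow, MvPolynomial.aeval_X]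
      norm_num
      ring
    rw [this, zero_mul])

lemma φ_mk (p : MvPolynomial (Fin 2) ℂ) : φ (mkc p) = Φ p := rfl

@[simp] lemma φ_cx : φ cx = Polynomial.X ^ 3 := by
  show Φ (X 0) = _
  simp [Φ]

@[simp] lemma φ_cy : φ cy = Polynomial.X ^ 2 := by
  show Φ (X 1) = _
  simp [Φ]

lemma cx_sq : cx ^ 2 = cy ^ 3 := by
  show mkc (X 0 ^ 2) = mkc (X 1 ^ 3)
  rw [Ideal.Quotient.eq]
  exact Ideal.subset_span rfl

lemma exists_rep (s : cuspCurve) : ∃ A B : Polynomial ℂ,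
    s = Polynomial.aeval cy A + Polynomial.aeval cy B * cx := by
  obtain ⟨p, rfl⟩ := Ideal.Quotient.mk_surjective s
  induction p using MvPolynomial.induction_on with
  | C a => exact ⟨Polynomial.C a, 0, by simp; rfl⟩
  | add p q hp hq =>
    obtain ⟨A, B, hA⟩ := hp
    obtain ⟨A', B', hA'⟩ := hq
    exact ⟨A + A', B + B', by rw [map_add mkc, hA, hA', map_add, map_add]; ring⟩
  | mul_X p i hp =>
    obtain ⟨A, B, hA⟩ := hp
    fin_cases i
    · refine ⟨Polynomial.X ^ 3 * B, A, ?_⟩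
      rw [map_mul mkc, hA]
      show (Polynomial.aeval cy A + Polynomial.aeval cy B * cx) * cx =
        Polynomial.aeval cy (Polynomial.X ^ 3 * B) + Polynomial.aeval cy A * cx
      rw [map_mul, map_pow, Polynomial.aeval_X]
      ring_nf
      rw [cx_sq]
    · refine ⟨Polynomial.X * A, Polynomial.X * B, ?_⟩
      rw [map_mul mkc, hA]
      show (Polynomial.aeval cy A + Polynomial.aeval cy B * cx) * cy =
        Polynomial.aeval cy (Polynomial.X * A) + Polynomial.aeval cy (Polynomial.X * B) * cx
      rw [map_mul, map_mul, Polynomial.aeval_X]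
      ring

end Cusp

namespace Cusp
open Polynomial

lemma even_odd_zero {A B : Polynomial ℂ}
    (h : Polynomial.expand ℂ 2 A + Polynomial.X * Polynomial.expand ℂ 2 B = 0) :
    A = 0 ∧ B = 0 := by
  have hA : A = 0 := by
    ext n
    have := congrArg (fun p => Polynomial.coeff p (2 * n)) h
    simp only [Polynomial.coeff_add, Polynomial.coeff_zero] at this
    rw [Polynomial.coeff_expand_mul' (by norm_num)] at this
    rcases n with _ | m
    · simpa using this
    · rw [show 2 * (m + 1) = (2 * m + 1) + 1 by ring, Polynomial.coeff_X_mul,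
        Polynomial.coeff_expand (by norm_num), if_neg (by omega)] at this
      simpa using this
  refine ⟨hA, ?_⟩
  rw [hA, map_zero, zero_add] at h
  have : Polynomial.expand ℂ 2 B = 0 := by
    rcases mul_eq_zero.mp h with h' | h'
    · exact absurd h' Polynomial.X_ne_zero
    · exact h'
  exact (Polynomial.expand_eq_zero (by norm_num)).mp this

lemma φ_rep (A B : Polynomial ℂ) :
    φ (Polynomial.aeval cy A + Polynomial.aeval cy B * cx) =
      Polynomial.expand ℂ 2 A + Polynomial.X ^ 3 * Polynomial.expand ℂ 2 B := by
  have key : ∀ P : Polynomial ℂ, φ (Polynomial.aeval cy P) = Polynomial.expand ℂ 2 P := by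
    intro P
    rw [← Polynomial.aeval_algHom_apply, φ_cy]
    rw [← Polynomial.expand_aeval 2 P Polynomial.X, Polynomial.aeval_X_left_apply]
  rw [map_add, map_mul, key, key, φ_cx]; ring

lemma φ_inj : Function.Injective φ := by
  rw [injective_iff_map_eq_zero]
  intro s hs
  obtain ⟨A, B, rfl⟩ := exists_rep s
  rw [φ_rep] at hs
  have h' : Polynomial.expand ℂ 2 A + Polynomial.X * Polynomial.expand ℂ 2 (Polynomial.X * B) = 0 := by
    rw [map_mul, Polynomial.expand_X]
    rw [← hs]; ring
  obtain ⟨hA, hB⟩ := even_odd_zero h'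
  have hB' : B = 0 := by
    rcases mul_eq_zero.mp hB with h' | h'
    · exact absurd h' Polynomial.X_ne_zero
    · exact h'
  rw [hA, hB']; simp

instance : IsDomain cuspCurve := φ_inj.isDomain φ.toRingHom

lemma cx_ne_zero : cx ≠ 0 := by
  intro h
  have := congrArg φ h
  rw [φ_cx, map_zero] at this
  exact Polynomial.X_ne_zero (pow_eq_zero_iff (by norm_num) |>.mp this)

lemma cx_mem_nzd : cx ∈ nonZeroDivisors cuspCurve :=
  mem_nonZeroDivisors_of_ne_zero cx_ne_zero

/-- coefficient 1 of φ s is always zero -/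
lemma φ_coeff_one (s : cuspCurve) : (φ s).coeff 1 = 0 := by
  obtain ⟨A, B, rfl⟩ := exists_rep s
  rw [φ_rep]
  rw [Polynomial.coeff_add, Polynomial.coeff_expand (by norm_num), if_neg (by omega)]
  rw [Polynomial.coeff_X_pow_mul']
  simp

end Cusp


namespace Cusp

noncomputable def πΩ : (Fin 2 →₀ cuspCurve) →ₗ[cuspCurve] KaehlerDifferential ℂ cuspCurve :=
  pres.differentialsSolution.π

lemma πΩ_single (i : Fin 2) (c : cuspCurve) :
    πΩ (Finsupp.single i c) = c • KaehlerDifferential.D ℂ cuspCurve (mkc (X i)) := by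
  show Finsupp.linearCombination _ _ _ = _
  erw [Finsupp.linearCombination_single]
  rfl

lemma πΩ_surj : Function.Surjective πΩ := by
  have h := pres.differentialsSolution_isPresentation
  rw [Module.Relations.Solution.isPresentation_iff] at h
  exact (Module.Relations.Solution.surjective_π_iff_span_eq_top _).mpr h.1

noncomputable def vrel : Fin 2 →₀ cuspCurve :=
  Finsupp.single 0 (2 * cx) - Finsupp.single 1 (3 * cy ^ 2)

noncomputable def bvec : Fin 2 →₀ cuspCurve :=
  Finsupp.single 0 (2 * cy) - Finsupp.single 1 (3 * cx)

lemma hrel_gen (P : Algebra.Presentation ℂ cuspCurve (Fin 2) Unit) (r : Unit) :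
    P.differentialsRelations.relation r =
      Finsupp.mapRange (algebraMap P.Ring cuspCurve) (map_zero _)
        ((KaehlerDifferential.mvPolynomialBasis ℂ (Fin 2)).repr
          (KaehlerDifferential.D ℂ P.Ring (P.relation r))) := rfl

lemma relation_eq : pres.differentialsRelations.relation () = vrel := by
  rw [hrel_gen]
  have hD : (KaehlerDifferential.mvPolynomialBasis ℂ (Fin 2)).repr
      (KaehlerDifferential.D ℂ (MvPolynomial (Fin 2) ℂ) fcusp) =
      Finsupp.single 0 (2 * X 0) - Finsupp.single 1 (3 * X 1 ^ 2) := by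
    rw [KaehlerDifferential.mvPolynomialBasis_repr_D]
    rw [show fcusp = X 0 ^ 2 - X 1 ^ 3 from rfl]
    rw [map_sub, Derivation.leibniz_pow, Derivation.leibniz_pow]
    rw [MvPolynomial.mkDerivation_X, MvPolynomial.mkDerivation_X]
    rw [Finsupp.smul_single, Finsupp.smul_single, Finsupp.smul_single, Finsupp.smul_single]
    congr 2
    · simp [two_smul]; ring
    · simp [Finsupp.smul_single]
  rw [show (pres.relation () : MvPolynomial (Fin 2) ℂ) = fcusp from rfl, hD]
  ext i
  rw [Finsupp.mapRange_apply, Algebra.Generators.algebraMap_apply]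
  fin_cases i
  · show aeval (fun i => (mkc (X i) : cuspCurve)) _ = vrel 0
    rw [show ((fun (i : Fin 2) => i) ⟨0, by omega⟩ : Fin 2) = 0 from rfl]
    rw [show ((Finsupp.single 0 (2 * X 0) - Finsupp.single 1 (3 * X 1 ^ 2) :
        Fin 2 →₀ MvPolynomial (Fin 2) ℂ)) 0 = 2 * X 0 by
      simp [Finsupp.single_apply]]
    rw [aeval_mk, map_mul mkc]
    simp [vrel, Finsupp.single_apply]
    rfl
  · show aeval (fun i => (mkc (X i) : cuspCurve)) _ = vrel 1
    rw [show ((fun (i : Fin 2) => i) ⟨1, by omega⟩ : Fin 2) = 1 from rfl]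
    rw [show ((Finsupp.single 0 (2 * X 0) - Finsupp.single 1 (3 * X 1 ^ 2) :
        Fin 2 →₀ MvPolynomial (Fin 2) ℂ)) 1 = -(3 * X 1 ^ 2) by
      simp [Finsupp.single_apply]]
    rw [map_neg, aeval_mk, map_mul mkc, map_pow mkc]
    simp [vrel, Finsupp.single_apply]
    rfl

lemma ker_πΩ : LinearMap.ker πΩ = Submodule.span cuspCurve {vrel} := by
  have h := pres.differentialsSolution_isPresentation
  rw [Module.Relations.Solution.isPresentation_iff] at h
  have : Set.range pres.differentialsRelations.relation = {vrel} := by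
    rw [← relation_eq]
    ext w
    simp only [Set.mem_range, Set.mem_singleton_iff]
    exact ⟨fun ⟨u, hu⟩ => hu ▸ rfl, fun h => ⟨(), h.symm⟩⟩
  rw [show (LinearMap.ker πΩ : Submodule cuspCurve (Fin 2 →₀ cuspCurve)) =
    LinearMap.ker pres.differentialsSolution.π from rfl, h.2, this]
  rfl

lemma beta_eq : cuspBeta = πΩ bvec := by
  rw [cuspBeta, bvec, map_sub, πΩ_single, πΩ_single]
  rfl

end Cusp

namespace Cusp

lemma πΩ_vrel : πΩ vrel = 0 := by
  have : vrel ∈ LinearMap.ker πΩ := by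
    rw [ker_πΩ]; exact Submodule.mem_span_singleton_self _
  exact this

lemma cx_smul_bvec : cx • bvec = cy • vrel := by
  ext i
  fin_cases i <;>
    simp only [bvec, vrel, Finsupp.smul_apply, Finsupp.sub_apply, Finsupp.single_apply,
      smul_eq_mul] <;> norm_num
  · ring
  · linear_combination (-3 : cuspCurve) * cx_sq

lemma cy2_smul_bvec : (cy ^ 2) • bvec = cx • vrel := by
  ext i
  fin_cases i <;>
    simp only [bvec, vrel, Finsupp.smul_apply, Finsupp.sub_apply, Finsupp.single_apply,
      smul_eq_mul] <;> norm_num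
  · linear_combination (-2 : cuspCurve) * cx_sq
  · ring

lemma cx_smul_beta : cx • cuspBeta = 0 := by
  rw [beta_eq, ← map_smul, cx_smul_bvec, map_smul, πΩ_vrel, smul_zero]

lemma cy2_smul_beta : (cy ^ 2) • cuspBeta = 0 := by
  rw [beta_eq, ← map_smul, cy2_smul_bvec, map_smul, πΩ_vrel, smul_zero]

lemma beta_torsion : cuspBeta ∈ Submodule.torsion cuspCurve (KaehlerDifferential ℂ cuspCurve) :=
  ⟨⟨cx, cx_mem_nzd⟩, cx_smul_beta⟩

lemma cy_beta_torsion :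
    cy • cuspBeta ∈ Submodule.torsion cuspCurve (KaehlerDifferential ℂ cuspCurve) :=
  Submodule.smul_mem _ _ beta_torsion

end Cusp

namespace Cusp
open Polynomial

lemma key_mem (n : Fin 2 →₀ cuspCurve)
    (hψ : 3 * Polynomial.X ^ 2 * φ (n 0) + 2 * Polynomial.X * φ (n 1) = 0) :
    ∃ s t : cuspCurve, (6 : cuspCurve) • n = s • vrel + t • bvec := by
  obtain ⟨A₀, A₁, h0⟩ := exists_rep (n 0)
  obtain ⟨A₁', B₁, h1⟩ := exists_rep (n 1)
  set B₀ := A₁' with hB₀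
  rw [h0, φ_rep, h1, φ_rep] at hψ
  have e1 : Polynomial.expand ℂ 2 (3 * A₀ + 2 * Polynomial.X * B₁) =
      3 * Polynomial.expand ℂ 2 A₀ + 2 * Polynomial.X ^ 2 * Polynomial.expand ℂ 2 B₁ := by
    simp only [map_add, map_mul, map_ofNat, Polynomial.expand_X]
  have e2 : Polynomial.expand ℂ 2 (2 * B₀ + 3 * Polynomial.X ^ 2 * A₁) =
      2 * Polynomial.expand ℂ 2 B₀ + 3 * Polynomial.X ^ 4 * Polynomial.expand ℂ 2 A₁ := by
    simp only [map_add, map_mul, map_ofNat, map_pow, Polynomial.expand_X]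
    ring
  have hgrp : Polynomial.X * (Polynomial.X *
      Polynomial.expand ℂ 2 (3 * A₀ + 2 * Polynomial.X * B₁)
      + Polynomial.expand ℂ 2 (2 * B₀ + 3 * Polynomial.X ^ 2 * A₁)) = 0 := by
    rw [e1, e2]
    linear_combination hψ
  have hinner : Polynomial.expand ℂ 2 (2 * B₀ + 3 * Polynomial.X ^ 2 * A₁) +
      Polynomial.X * Polynomial.expand ℂ 2 (3 * A₀ + 2 * Polynomial.X * B₁) = 0 := by
    rcases mul_eq_zero.mp hgrp with h | h
    · exact absurd h Polynomial.X_ne_zero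
    · linear_combination h
  obtain ⟨hQ, hP⟩ := even_odd_zero hinner
  have h6A : (6 : Polynomial ℂ) * A₀ = -(4 * Polynomial.X * B₁) := by
    linear_combination 2 * hP
  have h6B : (6 : Polynomial ℂ) * B₀ = -(9 * Polynomial.X ^ 2 * A₁) := by
    linear_combination 3 * hQ
  refine ⟨3 * Polynomial.aeval cy A₁, -(2 * Polynomial.aeval cy B₁), ?_⟩
  ext i
  fin_cases i <;>
    simp only [vrel, bvec, Finsupp.add_apply, Finsupp.smul_apply, Finsupp.sub_apply,
      Finsupp.single_apply, smul_eq_mul] <;> norm_num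
  · rw [h0]
    have := congrArg (Polynomial.aeval cy) h6A
    simp only [map_mul, map_ofNat, map_neg, Polynomial.aeval_X] at this
    linear_combination this
  · rw [h1]
    have := congrArg (Polynomial.aeval cy) h6B
    simp only [map_mul, map_ofNat, map_neg, map_pow, Polynomial.aeval_X] at this
    linear_combination this

end Cusp

namespace Cusp
open Polynomial

lemma mul_smulΩ (a b : cuspCurve) (m : KaehlerDifferential ℂ cuspCurve) :
    (a * b) • m = a • b • m :=
  mul_smul a b m

lemma add_smulΩ (a b : cuspCurve) (m : KaehlerDifferential ℂ cuspCurve) :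
    (a + b) • m = a • m + b • m :=
  add_smul a b m

lemma one_smulΩ (m : KaehlerDifferential ℂ cuspCurve) : (1 : cuspCurve) • m = m :=
  one_smul cuspCurve m

lemma algebraMap_smulΩ (c : ℂ) (m : KaehlerDifferential ℂ cuspCurve) :
    algebraMap ℂ cuspCurve c • m = c • m :=
  algebraMap_smul cuspCurve c m

lemma six_unit : (algebraMap ℂ cuspCurve (6⁻¹ : ℂ)) * 6 = 1 := by
  rw [show ((6 : cuspCurve)) = algebraMap ℂ cuspCurve 6 by rw [map_ofNat], ← map_mul]
  norm_num

lemma torsion_eq :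
    Submodule.torsion cuspCurve (KaehlerDifferential ℂ cuspCurve) =
      Submodule.span cuspCurve {cuspBeta} := by
  apply le_antisymm
  · rintro ω hω
    obtain ⟨⟨r, hr⟩, hrω⟩ := hω
    obtain ⟨n, rfl⟩ := πΩ_surj ω
    have hker : r • n ∈ LinearMap.ker πΩ := by
      rw [LinearMap.mem_ker, map_smul]
      exact hrω
    rw [ker_πΩ, Submodule.mem_span_singleton] at hker
    obtain ⟨c, hc⟩ := hker
    have h0 : c * (2 * cx) = r * n 0 := by
      have := congrArg (fun f => f 0) hc
      simpa [vrel, Finsupp.smul_apply, Finsupp.sub_apply, Finsupp.single_apply] using this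
    have h1 : c * (-(3 * cy ^ 2)) = r * n 1 := by
      have := congrArg (fun f => f 1) hc
      simpa [vrel, Finsupp.smul_apply, Finsupp.sub_apply, Finsupp.single_apply] using this
    have hφr : φ r ≠ 0 := by
      intro h
      exact nonZeroDivisors.ne_zero hr (φ_inj (h.trans (map_zero φ).symm))
    have e0 := congrArg φ h0
    have e1 := congrArg φ h1
    simp only [map_mul, map_neg, map_pow, map_ofNat, φ_cx, φ_cy] at e0 e1
    have hψ : 3 * Polynomial.X ^ 2 * φ (n 0) + 2 * Polynomial.X * φ (n 1) = 0 := by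
      have hmul : φ r * (3 * Polynomial.X ^ 2 * φ (n 0) + 2 * Polynomial.X * φ (n 1)) = 0 := by
        linear_combination 3 * Polynomial.X ^ 2 * e0.symm + 2 * Polynomial.X * e1.symm
      rcases mul_eq_zero.mp hmul with h | h
      · exact absurd h hφr
      · exact h
    obtain ⟨s, t, hst⟩ := key_mem n hψ
    have h6 : (6 : cuspCurve) • πΩ n = t • cuspBeta := by
      rw [← map_smul, hst, map_add, map_smul, map_smul, πΩ_vrel, smul_zero, zero_add, beta_eq]
    rw [Submodule.mem_span_singleton]
    refine ⟨algebraMap ℂ cuspCurve (6⁻¹ : ℂ) * t, ?_⟩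
    calc (algebraMap ℂ cuspCurve (6⁻¹ : ℂ) * t) • cuspBeta
        = algebraMap ℂ cuspCurve (6⁻¹ : ℂ) • (t • cuspBeta) := by rw [mul_smulΩ]
      _ = algebraMap ℂ cuspCurve (6⁻¹ : ℂ) • ((6 : cuspCurve) • πΩ n) := by rw [h6]
      _ = ((algebraMap ℂ cuspCurve (6⁻¹ : ℂ)) * 6) • πΩ n := by rw [mul_smulΩ]
      _ = πΩ n := by rw [six_unit, one_smulΩ]
  · rw [Submodule.span_le, Set.singleton_subset_iff]
    exact beta_torsion

end Cusp

namespace Cusp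
open Polynomial

lemma smul_beta_decomp (u : cuspCurve) :
    ∃ a b : ℂ, u • cuspBeta = b • cuspBeta + a • (cy • cuspBeta) := by
  obtain ⟨A, B, rfl⟩ := exists_rep u
  have hBx : (Polynomial.aeval cy B * cx) • cuspBeta = 0 := by
    rw [mul_smulΩ, cx_smul_beta, smul_zero]
  set R := A %ₘ (Polynomial.X ^ 2) with hR
  have hdecomp : Polynomial.aeval cy A • cuspBeta = Polynomial.aeval cy R • cuspBeta := by
    conv_lhs => rw [← Polynomial.modByMonic_add_div A (Polynomial.X ^ 2)]
    rw [map_add, map_mul, map_pow, Polynomial.aeval_X, add_smulΩ, ← hR,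
      mul_comm ((cy : cuspCurve) ^ 2), mul_smulΩ, cy2_smul_beta, smul_zero, add_zero]
  have hdeg : R.degree ≤ 1 := by
    have h := Polynomial.degree_modByMonic_lt A (Polynomial.monic_X_pow (R := ℂ) 2)
    rw [Polynomial.degree_X_pow] at h
    exact Order.le_of_lt_succ (by exact_mod_cast h)
  refine ⟨R.coeff 1, R.coeff 0, ?_⟩
  rw [add_smulΩ, hBx, add_zero, hdecomp]
  conv_lhs => rw [Polynomial.eq_X_add_C_of_degree_le_one hdeg]
  rw [map_add, map_mul, Polynomial.aeval_X, Polynomial.aeval_C, Polynomial.aeval_C, add_smulΩ,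
    mul_smulΩ, algebraMap_smulΩ, algebraMap_smulΩ]
  ring_nf
  rw [add_comm]

lemma indep (c₀ c₁ : ℂ) (h : c₀ • cuspBeta + c₁ • (cy • cuspBeta) = 0) :
    c₀ = 0 ∧ c₁ = 0 := by
  set s : cuspCurve := algebraMap ℂ cuspCurve c₀ + algebraMap ℂ cuspCurve c₁ * cy with hs
  have hsβ : s • cuspBeta = 0 := by
    rw [hs, add_smulΩ, mul_smulΩ, algebraMap_smulΩ, algebraMap_smulΩ]
    exact h
  have hker : s • bvec ∈ LinearMap.ker πΩ := by
    rw [LinearMap.mem_ker, map_smul, ← beta_eq, hsβ]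
  rw [ker_πΩ, Submodule.mem_span_singleton] at hker
  obtain ⟨c, hc⟩ := hker
  have h0 : c * (2 * cx) = s * (2 * cy) := by
    have := congrArg (fun f => f 0) hc
    simpa [vrel, bvec, Finsupp.smul_apply, Finsupp.sub_apply, Finsupp.single_apply] using this
  have e0 := congrArg φ h0
  have hφs : φ s = Polynomial.C c₀ + Polynomial.C c₁ * Polynomial.X ^ 2 := by
    rw [hs, map_add, map_mul, φ_cy, AlgHom.commutes, AlgHom.commutes]
    rfl
  rw [map_mul, map_mul, map_mul, map_mul, φ_cx, φ_cy, hφs, show φ 2 = 2 from map_ofNat φ 2] at e0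
  have hC2 : (2 : Polynomial ℂ) = Polynomial.C 2 := (map_ofNat Polynomial.C 2).symm
  have hc₀ : c₀ = 0 := by
    have h2 := congrArg (fun p => Polynomial.coeff p 2) e0
    rw [show φ c * (2 * Polynomial.X ^ 3) = (φ c * 2) * Polynomial.X ^ 3 by ring,
      show (Polynomial.C c₀ + Polynomial.C c₁ * Polynomial.X ^ 2) * (2 * Polynomial.X ^ 2)
        = Polynomial.C (2 * c₀) * Polynomial.X ^ 2 + Polynomial.C (2 * c₁) * Polynomial.X ^ 4 by
        rw [Polynomial.C_mul, Polynomial.C_mul, ← hC2]; ring,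
      Polynomial.coeff_mul_X_pow'] at h2
    rw [Polynomial.coeff_add, Polynomial.coeff_C_mul, Polynomial.coeff_C_mul,
      Polynomial.coeff_X_pow, Polynomial.coeff_X_pow] at h2
    norm_num at h2
    exact h2
  have hc₁ : c₁ = 0 := by
    have h4 := congrArg (fun p => Polynomial.coeff p 4) e0
    rw [show φ c * (2 * Polynomial.X ^ 3) = (φ c * 2) * Polynomial.X ^ 3 by ring,
      show (Polynomial.C c₀ + Polynomial.C c₁ * Polynomial.X ^ 2) * (2 * Polynomial.X ^ 2)
        = Polynomial.C (2 * c₀) * Polynomial.X ^ 2 + Polynomial.C (2 * c₁) * Polynomial.X ^ 4 by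
        rw [Polynomial.C_mul, Polynomial.C_mul, ← hC2]; ring,
      Polynomial.coeff_mul_X_pow'] at h4
    rw [hC2, Polynomial.coeff_mul_C] at h4
    rw [φ_coeff_one, Polynomial.coeff_add, Polynomial.coeff_C_mul, Polynomial.coeff_C_mul,
      Polynomial.coeff_X_pow, Polynomial.coeff_X_pow] at h4
    norm_num at h4
    exact h4
  exact ⟨hc₀, hc₁⟩

end Cusp


open Cusp

/-- For the cuspidal cubic `S = ℂ[x,y]/(x² − y³)` and
`β = 2y·dx − 3x·dy ∈ Ω_{S/ℂ}`, the torsion submodule of the `S`-module `Ω_{S/ℂ}` equals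
the `S`-submodule generated by `β`, and as a `ℂ`-vector space this torsion submodule has
dimension `2`, with basis `β`, `y·β`. -/
theorem stmt_6 :
    Submodule.torsion cuspCurve (KaehlerDifferential ℂ cuspCurve) =
      Submodule.span cuspCurve {cuspBeta} ∧
    ∃ (h1 : cuspBeta ∈ Submodule.torsion cuspCurve (KaehlerDifferential ℂ cuspCurve))
      (h2 : cy • cuspBeta ∈ Submodule.torsion cuspCurve (KaehlerDifferential ℂ cuspCurve))
      (b : Module.Basis (Fin 2) ℂ (Submodule.torsion cuspCurve (KaehlerDifferential ℂ cuspCurve))),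
        b 0 = ⟨cuspBeta, h1⟩ ∧ b 1 = ⟨cy • cuspBeta, h2⟩ ∧
        Module.finrank ℂ
          (Submodule.torsion cuspCurve (KaehlerDifferential ℂ cuspCurve)) = 2 := by
  set W := Submodule.torsion cuspCurve (KaehlerDifferential ℂ cuspCurve) with hW
  let w : Fin 2 → W := ![⟨cuspBeta, beta_torsion⟩, ⟨cy • cuspBeta, cy_beta_torsion⟩]
  have hli : LinearIndependent ℂ w := by
    rw [Fintype.linearIndependent_iff]
    intro g hg
    have hcoe : (g 0) • cuspBeta + (g 1) • (cy • cuspBeta) = 0 := by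
      have := congrArg (Subtype.val) hg
      simp only [Fin.sum_univ_two, Submodule.coe_add, Submodule.coe_smul, ZeroMemClass.coe_zero, w,
        Matrix.cons_val_zero, Matrix.cons_val_one] at this
      exact this
    obtain ⟨ha, hb⟩ := indep _ _ hcoe
    intro i; fin_cases i <;> assumption
  have hsp : ⊤ ≤ Submodule.span ℂ (Set.range w) := by
    rintro ⟨ω, hω⟩ -
    have hω' : ω ∈ Submodule.span cuspCurve {cuspBeta} := by rw [← torsion_eq]; exact hω
    rw [Submodule.mem_span_singleton] at hω'
    obtain ⟨u, hu⟩ := hω'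
    obtain ⟨a, b, hab⟩ := smul_beta_decomp u
    have hx : (⟨ω, hω⟩ : W) = b • w 0 + a • w 1 := by
      apply Subtype.ext
      show ω = _
      rw [← hu]
      rw [hab]
      simp only [w, Submodule.coe_add, Submodule.coe_smul, Matrix.cons_val_zero, Matrix.cons_val_one]
      rfl
    rw [hx]
    exact add_mem (Submodule.smul_mem _ _ (Submodule.subset_span ⟨0, rfl⟩))
      (Submodule.smul_mem _ _ (Submodule.subset_span ⟨1, rfl⟩))
  refine ⟨torsion_eq, beta_torsion, cy_beta_torsion, Module.Basis.mk hli hsp, ?_, ?_, ?_⟩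
  · rw [Module.Basis.mk_apply]; rfl
  · rw [Module.Basis.mk_apply]; rfl
  · rw [Module.finrank_eq_card_basis (Module.Basis.mk hli hsp), Fintype.card_fin]
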